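/- Let w ∈ L_n, m ∈ {1,…,n−1} and k ≥ 0, and let F_n^min(w,m) be the set of ≼-minimal elements of {σ_1,…,σ_m} ∪ F_n^min(w) (a finite set). Suppose D assigns to every subset S ⊆ F_n^min(w,m) an element D(S) ∈ B_n^+ that is a least common right-multiple of S (i.e., every element of S left-divides D(S), and D(S) left-divides every common right-multiple of S; in particular D(∅) = 1). Then x_{n,k}(w,m) = Σ_{S ⊆ F_n^min(w,m)} (−1)^{|S|} · x_{n, k−|w|−|D(S)|}, where the sum ranges over all subsets S of F_n^min(w,m) and |S| is the cardinality of S. -/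

import Mathlib

/-!
Common setup: the positive braid monoid `B_n^+` on `n` strands, presented by the
Artin generators `σ_1, …, σ_{n-1}` (1-based indexing) with the braid relations;
lex-representatives, forbidden prefixes, admissible functions, etc.
-/

namespace BraidPaper

/-- Words in the Artin generators: the free monoid on `n - 1` letters. -/
abbrev Word (n : ℕ) := FreeMonoid (Fin (n - 1))

/-- The generator `σ_i` (`1 ≤ i ≤ n - 1`, 1-based) as a one-letter word;
the empty word for out-of-range indices. -/
def sigma (n : ℕ) (i : ℕ) : Word n :=
  if h : 1 ≤ i ∧ i ≤ n - 1 then FreeMonoid.of (⟨i - 1, by omega⟩ : Fin (n - 1)) else 1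

/-- The braid relations. -/
inductive BraidRel (n : ℕ) : Word n → Word n → Prop
  | comm : ∀ i j : ℕ, 1 ≤ i → i ≤ n - 1 → 1 ≤ j → j ≤ n - 1 → (i + 2 ≤ j ∨ j + 2 ≤ i) →
      BraidRel n (sigma n i * sigma n j) (sigma n j * sigma n i)
  | braid : ∀ i : ℕ, 1 ≤ i → i + 1 ≤ n - 1 →
      BraidRel n (sigma n i * sigma n (i + 1) * sigma n i)
        (sigma n (i + 1) * sigma n i * sigma n (i + 1))

/-- The congruence generated by the braid relations. -/
def braidCon (n : ℕ) : Con (Word n) := conGen (BraidRel n)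

/-- The positive braid monoid `B_n^+`. -/
abbrev PB (n : ℕ) := (braidCon n).Quotient

/-- The canonical projection `b : A_n^* → B_n^+`. -/
def pr (n : ℕ) : Word n →* PB n := (braidCon n).mk'

/-- The length homomorphism on words (with values in `Multiplicative ℕ`). -/
def lenHom (n : ℕ) : Word n →* Multiplicative ℕ :=
  FreeMonoid.lift fun _ => Multiplicative.ofAdd 1

lemma lenHom_sigma (n t : ℕ) (h1 : 1 ≤ t) (h2 : t ≤ n - 1) :
    lenHom n (sigma n t) = Multiplicative.ofAdd 1 := by
  rw [sigma, dif_pos ⟨h1, h2⟩]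
  exact FreeMonoid.lift_eval_of _ _

lemma braidCon_le_ker (n : ℕ) : braidCon n ≤ Con.ker (lenHom n) := by
  refine Con.conGen_le.mpr ?_
  intro x y h
  rw [Con.ker_rel]
  cases h with
  | comm i j hi hi' hj hj' hij =>
      rw [map_mul, map_mul, mul_comm]
  | braid i hi hi' =>
      rw [map_mul, map_mul, map_mul, map_mul,
        lenHom_sigma n i hi (by omega), lenHom_sigma n (i + 1) (by omega) hi']

/-- The (well-defined) length of a positive braid. -/
def len (n : ℕ) (x : PB n) : ℕ :=
  Multiplicative.toAdd (Con.lift _ (lenHom n) (braidCon_le_ker n) x)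

/-- The length of a word. -/
def wlen {n : ℕ} (w : Word n) : ℕ := (FreeMonoid.toList w).length

/-- Strict lexicographic order on words, induced by `σ_1 < σ_2 < ⋯ < σ_{n-1}`. -/
def lexLt {n : ℕ} (u v : Word n) : Prop :=
  List.Lex (· < ·) (FreeMonoid.toList u) (FreeMonoid.toList v)

/-- `L_n`: the set of lex-representatives, i.e. words that are `≤_lex`-minimal among
all words representing the same element of `B_n^+` (all of which have equal length). -/
def Ln (n : ℕ) : Set (Word n) :=
  {w | ∀ v : Word n, pr n v = pr n w → ¬ lexLt v w}

open Classical in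
/-- `ω(β)`: the lex-representative of a positive braid `β`. -/
noncomputable def omegaRep (n : ℕ) (β : PB n) : Word n :=
  if h : ∃ w : Word n, pr n w = β ∧ w ∈ Ln n then h.choose else 1

/-- `F_n(w)`: the set of forbidden prefixes after `w`. -/
def Fset (n : ℕ) (w : Word n) : Set (PB n) :=
  {α | w * omegaRep n α ∉ Ln n}

/-- Left-divisibility `a ≼ b` in `B_n^+`. -/
def ldvd (n : ℕ) (a b : PB n) : Prop := ∃ c : PB n, a * c = b

/-- The set of `≼`-minimal elements of a subset of `B_n^+`. -/
def minimals (n : ℕ) (S : Set (PB n)) : Set (PB n) :=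
  {a | a ∈ S ∧ ∀ b ∈ S, ldvd n b a → b = a}

/-- `F_n^min(w)`: the set of minimal forbidden prefixes after `w`. -/
def Fmin (n : ℕ) (w : Word n) : Set (PB n) := minimals n (Fset n w)

/-- `d` is a least common right-multiple of the set `S`. -/
def IsLcm (n : ℕ) (S : Set (PB n)) (d : PB n) : Prop :=
  (∀ a ∈ S, ldvd n a d) ∧ ∀ e : PB n, (∀ a ∈ S, ldvd n a e) → ldvd n d e

/-- The descending product `σ_a σ_{a-1} ⋯ σ_b` (empty if `b > a`). -/
def prodDesc (n a b : ℕ) : Word n :=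
  (((List.range' b (a + 1 - b)).reverse).map (sigma n)).prod

/-- The ascending product `σ_a σ_{a+1} ⋯ σ_b` (empty if `a > b`). -/
def prodAsc (n a b : ℕ) : Word n :=
  ((List.range' a (b + 1 - a)).map (sigma n)).prod

/-- Admissible functions `f : {1,…,n-1} → {-1,0,1,…,n-1}`. -/
def Admissible (n : ℕ) (f : ℕ → ℤ) : Prop :=
  (∀ i : ℕ, 1 ≤ i → i ≤ n - 1 → -1 ≤ f i ∧ f i ≤ (i : ℤ)) ∧ f 1 ≠ -1

/-- The set `F_f ⊆ B_n^+` associated to an admissible function `f`: the elements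
`σ_i σ_{i-1} ⋯ σ_{f(i)}` for `i` with `1 ≤ f(i) ≤ i`, together with the elements
`σ_{i-1} σ_i` for `i` with `f(i) = -1`. -/
def Ff (n : ℕ) (f : ℕ → ℤ) : Set (PB n) :=
  {x | ∃ i : ℕ, 1 ≤ i ∧ i ≤ n - 1 ∧ 1 ≤ f i ∧ f i ≤ (i : ℤ) ∧
        x = pr n (prodDesc n i (f i).toNat)} ∪
  {x | ∃ i : ℕ, 1 ≤ i ∧ i ≤ n - 1 ∧ f i = -1 ∧ x = pr n (sigma n (i - 1) * sigma n i)}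

/-- `F_n^min(w, m)`: the set of `≼`-minimal elements of `{σ_1,…,σ_m} ∪ F_n^min(w)`. -/
def FminM (n : ℕ) (w : Word n) (m : ℕ) : Set (PB n) :=
  minimals n ({x | ∃ i : ℕ, 1 ≤ i ∧ i ≤ m ∧ x = pr n (sigma n i)} ∪ Fmin n w)

/-- `x_{n,j}` (for `j : ℤ`): the number of elements of `B_n^+` of length `j`
(`0` for negative `j`). -/
noncomputable def xcount (n : ℕ) (j : ℤ) : ℕ :=
  Nat.card {x : PB n // (len n x : ℤ) = j}

/-- `x_{n,k}(w,m)`: the number of words in `L_n` of length `k` of the form `w·w'`,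
where `w'` does not begin with any of `σ_1, …, σ_m`. -/
noncomputable def xwm (n k : ℕ) (w : Word n) (m : ℕ) : ℕ :=
  Nat.card {v : Word n // wlen v = k ∧ v ∈ Ln n ∧
    ∃ w' : Word n, v = w * w' ∧
      ∀ i : ℕ, 1 ≤ i → i ≤ m → ¬ ∃ u : Word n, w' = sigma n i * u}

section Dev
open Relation

variable {n : ℕ}

lemma sigma_of (a : Fin (n - 1)) : sigma n (a.val + 1) = FreeMonoid.of a := by
  have ha := a.isLt
  have h : 1 ≤ a.val + 1 ∧ a.val + 1 ≤ n - 1 := ⟨Nat.le_add_left _ _, by omega⟩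
  rw [sigma, dif_pos h]
  exact congrArg FreeMonoid.of (Fin.ext (by simp))

/-- The braid relations in letter form. -/
inductive Rel (n : ℕ) : Word n → Word n → Prop
  | comm (a b : Fin (n - 1)) (h : a.val + 2 ≤ b.val ∨ b.val + 2 ≤ a.val) :
      Rel n (FreeMonoid.of a * FreeMonoid.of b) (FreeMonoid.of b * FreeMonoid.of a)
  | braid (a b : Fin (n - 1)) (h : b.val = a.val + 1) :
      Rel n (FreeMonoid.of a * FreeMonoid.of b * FreeMonoid.of a)
        (FreeMonoid.of b * FreeMonoid.of a * FreeMonoid.of b)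

lemma rel_of_braidRel {u v : Word n} (h : BraidRel n u v) : Rel n u v := by
  cases h with
  | comm i j hi hi' hj hj' hij =>
      have h1 : sigma n i = FreeMonoid.of (⟨i - 1, by omega⟩ : Fin (n - 1)) := by
        rw [sigma, dif_pos ⟨hi, hi'⟩]
      have h2 : sigma n j = FreeMonoid.of (⟨j - 1, by omega⟩ : Fin (n - 1)) := by
        rw [sigma, dif_pos ⟨hj, hj'⟩]
      rw [h1, h2]
      exact Rel.comm _ _ (by simp; omega)
  | braid i hi hi' =>
      have h1 : sigma n i = FreeMonoid.of (⟨i - 1, by omega⟩ : Fin (n - 1)) := by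
        rw [sigma, dif_pos ⟨hi, by omega⟩]
      have h2 : sigma n (i + 1) = FreeMonoid.of (⟨i, by omega⟩ : Fin (n - 1)) := by
        rw [sigma, dif_pos ⟨by omega, hi'⟩]
        exact congrArg FreeMonoid.of (Fin.ext (by simp))
      rw [h1, h2]
      exact Rel.braid _ _ (by simp; omega)

lemma braidCon_of_rel {u v : Word n} (h : Rel n u v) : braidCon n u v := by
  cases h with
  | comm a b hab =>
      have := ConGen.Rel.of _ _ (BraidRel.comm (n := n) (a.val + 1) (b.val + 1)
        (by omega) (by have := a.isLt; omega) (by omega) (by have := b.isLt; omega)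
        (by omega))
      rwa [sigma_of, sigma_of] at this
  | braid a b hab =>
      have := ConGen.Rel.of _ _ (BraidRel.braid (n := n) (a.val + 1)
        (by omega) (by have := b.isLt; omega))
      have e : a.val + 1 + 1 = b.val + 1 := by omega
      rwa [e, sigma_of, sigma_of] at this

/-- One rewriting step (in context, in either direction). -/
def Step (n : ℕ) (u v : Word n) : Prop :=
  ∃ p q l r : Word n, (Rel n l r ∨ Rel n r l) ∧ u = p * l * q ∧ v = p * r * q

lemma Step.symm' {u v : Word n} (h : Step n u v) : Step n v u := by
  obtain ⟨p, q, l, r, hlr, hu, hv⟩ := h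
  exact ⟨p, q, r, l, hlr.symm, hv, hu⟩

lemma Step.mul_left {u v : Word n} (w : Word n) (h : Step n u v) :
    Step n (w * u) (w * v) := by
  obtain ⟨p, q, l, r, hlr, hu, hv⟩ := h
  exact ⟨w * p, q, l, r, hlr, by rw [hu]; simp [mul_assoc], by rw [hv]; simp [mul_assoc]⟩

lemma Step.mul_right {u v : Word n} (w : Word n) (h : Step n u v) :
    Step n (u * w) (v * w) := by
  obtain ⟨p, q, l, r, hlr, hu, hv⟩ := h
  exact ⟨p, q * w, l, r, hlr, by rw [hu]; simp [mul_assoc], by rw [hv]; simp [mul_assoc]⟩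

/-- The congruence given by reflexive-transitive closure of `Step`. -/
def stepCon (n : ℕ) : Con (Word n) where
  r := ReflTransGen (Step n)
  iseqv := ⟨fun _ => ReflTransGen.refl,
    fun h => (@Relation.ReflTransGen.stdSymm _ _ ⟨fun _ _ hs => hs.symm'⟩).symm _ _ h,
    fun h1 h2 => h1.trans h2⟩
  mul' := fun {w x y z} h1 h2 => by
    refine ReflTransGen.trans (b := x * y) ?_ ?_
    · exact Relation.ReflTransGen.lift (fun t => t * y) (fun a b (hab : Step n a b) => hab.mul_right y) _ _ h1
    · exact Relation.ReflTransGen.lift (fun t => x * t) (fun a b (hab : Step n a b) => hab.mul_left x) _ _ h2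

lemma braidCon_iff_step {u v : Word n} :
    braidCon n u v ↔ ReflTransGen (Step n) u v := by
  constructor
  · intro h
    exact (Con.conGen_le (c := stepCon n)).mpr
      (fun x y hxy => ReflTransGen.single ⟨1, 1, x, y, Or.inl (rel_of_braidRel hxy),
        by simp, by simp⟩) h
  · intro h
    induction h with
    | refl => exact (braidCon n).refl _
    | tail _ hs ih =>
        refine (braidCon n).trans ih ?_
        obtain ⟨p, q, l, r, hlr, hu, hv⟩ := hs
        subst hu hv
        refine (braidCon n).mul ((braidCon n).mul ((braidCon n).refl p) ?_) ((braidCon n).refl q)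
        cases hlr with
        | inl h' => exact braidCon_of_rel h'
        | inr h' => exact (braidCon n).symm (braidCon_of_rel h')

lemma pr_eq_iff {u v : Word n} :
    pr n u = pr n v ↔ ReflTransGen (Step n) u v := by
  rw [← braidCon_iff_step]
  exact Con.eq _

lemma pr_eq_of_step {u v : Word n} (h : Step n u v) : pr n u = pr n v :=
  pr_eq_iff.2 (ReflTransGen.single h)

lemma lenHom_apply (u : Word n) : lenHom n u = Multiplicative.ofAdd (wlen u) := by
  rw [lenHom, FreeMonoid.lift_apply, wlen]
  induction FreeMonoid.toList u with
  | nil => rfl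
  | cons a l ih =>
      simp only [List.map_cons, List.prod_cons, ih, List.length_cons, ← ofAdd_add]
      rw [Nat.add_comm]

lemma len_pr (u : Word n) : len n (pr n u) = wlen u := by
  rw [len, pr, Con.lift_mk', lenHom_apply, toAdd_ofAdd]

lemma len_mul (x y : PB n) : len n (x * y) = len n x + len n y := by
  rw [len, len, len, map_mul, toAdd_mul]

lemma pr_surjective : Function.Surjective (pr n) := Con.mk'_surjective

lemma wlen_eq_of_pr_eq {u v : Word n} (h : pr n u = pr n v) : wlen u = wlen v := by
  rw [← len_pr, ← len_pr, h]

lemma wlen_one : wlen (1 : Word n) = 0 := rfl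

lemma len_one : len n (1 : PB n) = 0 := by
  have := len_pr (n := n) 1
  rwa [map_one] at this

lemma eq_one_of_len_eq_zero {x : PB n} (h : len n x = 0) : x = 1 := by
  obtain ⟨u, rfl⟩ := pr_surjective (n := n) x
  rw [len_pr] at h
  have : FreeMonoid.toList u = [] := List.length_eq_zero_iff.mp h
  have hu : u = 1 := by
    have := congrArg FreeMonoid.ofList this
    rwa [FreeMonoid.ofList_toList] at this
  rw [hu, map_one]

end Dev
section Garside
open Relation FreeMonoid

variable {n : ℕ}

/-- letter image in `B_n^+` -/
def g {n : ℕ} (a : Fin (n - 1)) : PB n := pr n (FreeMonoid.of a)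

/-- image of a list of letters -/
def prl {n : ℕ} (l : List (Fin (n - 1))) : PB n := pr n (FreeMonoid.ofList l)

@[simp] lemma prl_nil : prl ([] : List (Fin (n - 1))) = 1 := by
  rw [prl, FreeMonoid.ofList_nil, map_one]

@[simp] lemma prl_cons (a : Fin (n - 1)) (l : List (Fin (n - 1))) :
    prl (a :: l) = g a * prl l := by
  rw [prl, FreeMonoid.ofList_cons, map_mul]; rfl

@[simp] lemma prl_append (l₁ l₂ : List (Fin (n - 1))) :
    prl (l₁ ++ l₂) = prl l₁ * prl l₂ := by
  rw [prl, FreeMonoid.ofList_append, map_mul]; rfl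

lemma prl_toList (u : Word n) : prl (FreeMonoid.toList u) = pr n u := by
  rw [prl, FreeMonoid.ofList_toList]

lemma wlen_ofList (l : List (Fin (n - 1))) : wlen (FreeMonoid.ofList l) = l.length := rfl

lemma prl_length_eq {u v : List (Fin (n - 1))} (h : prl u = prl v) :
    u.length = v.length := by
  have := wlen_eq_of_pr_eq h
  rwa [wlen_ofList, wlen_ofList] at this

/-- adjacency of letters -/
def AdjP {n : ℕ} (a b : Fin (n - 1)) : Prop := b.val = a.val + 1 ∨ a.val = b.val + 1

/-- distance ≥ 2 -/
def FarP {n : ℕ} (a b : Fin (n - 1)) : Prop := a.val + 2 ≤ b.val ∨ b.val + 2 ≤ a.val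

instance (a b : Fin (n - 1)) : Decidable (AdjP a b) :=
  inferInstanceAs (Decidable (_ ∨ _))

lemma AdjP.symm {a b : Fin (n - 1)} (h : AdjP a b) : AdjP b a := Or.symm h

lemma FarP.symm {a b : Fin (n - 1)} (h : FarP a b) : FarP b a := Or.symm h

lemma AdjP.ne {a b : Fin (n - 1)} (h : AdjP a b) : a ≠ b := by
  intro he; subst he; rcases h with h | h <;> omega

lemma FarP.ne {a b : Fin (n - 1)} (h : FarP a b) : a ≠ b := by
  intro he; subst he; rcases h with h | h <;> omega

lemma FarP.not_adj {a b : Fin (n - 1)} (h : FarP a b) : ¬ AdjP a b := by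
  rintro (h' | h') <;> rcases h with h | h <;> omega

lemma adjP_or_farP {a b : Fin (n - 1)} (h : a ≠ b) : AdjP a b ∨ FarP a b := by
  have : a.val ≠ b.val := fun hv => h (Fin.ext hv)
  rw [AdjP, FarP]; omega

lemma adj_adj_far {a b c : Fin (n - 1)} (h1 : AdjP c a) (h2 : AdjP c b) (h : a ≠ b) :
    FarP a b := by
  have : a.val ≠ b.val := fun hv => h (Fin.ext hv)
  rcases h1 with h1 | h1 <;> rcases h2 with h2 | h2 <;> rw [FarP] <;> omega

/-- the word `w(a,b)` with `a ⋅ w(a,b) = lcm(a,b)` -/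
def wab {n : ℕ} (a b : Fin (n - 1)) : List (Fin (n - 1)) :=
  if AdjP a b then [b, a] else [b]

lemma wab_adj {a b : Fin (n - 1)} (h : AdjP a b) : wab a b = [b, a] := if_pos h

lemma wab_far {a b : Fin (n - 1)} (h : FarP a b) : wab a b = [b] := if_neg h.not_adj

lemma wab_length_symm (a b : Fin (n - 1)) : (wab a b).length = (wab b a).length := by
  unfold wab
  by_cases h : AdjP a b
  · rw [if_pos h, if_pos h.symm]
    rfl
  · rw [if_neg h, if_neg (fun h' => h (AdjP.symm h'))]
    rfl



lemma pr_eq_of_braidCon {u v : Word n} (h : braidCon n u v) : pr n u = pr n v :=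
  pr_eq_iff.2 (braidCon_iff_step.1 h)

lemma g_comm {a b : Fin (n - 1)} (h : FarP a b) : g a * g b = g b * g a := by
  have := pr_eq_of_braidCon (braidCon_of_rel (Rel.comm a b h))
  simpa [g, map_mul] using this

lemma g_braid {a b : Fin (n - 1)} (h : AdjP a b) :
    g a * g b * g a = g b * g a * g b := by
  rcases h with h | h
  · have := pr_eq_of_braidCon (braidCon_of_rel (Rel.braid a b h))
    simpa [g, map_mul] using this
  · have := pr_eq_of_braidCon (braidCon_of_rel (Rel.braid b a h))
    simp only [map_mul] at this
    simpa [g, map_mul] using this.symm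

lemma g_comm' {a b : Fin (n - 1)} (h : FarP a b) (t : PB n) :
    g a * (g b * t) = g b * (g a * t) := by
  rw [← mul_assoc, ← mul_assoc, g_comm h]

lemma g_braid' {a b : Fin (n - 1)} (h : AdjP a b) (t : PB n) :
    g a * (g b * (g a * t)) = g b * (g a * (g b * t)) := by
  rw [← mul_assoc, ← mul_assoc, ← mul_assoc, ← mul_assoc, g_braid h]

/-- shape of the two sides of a braid relation -/
lemma rel_shape {l r : Word n} (h : Rel n l r ∨ Rel n r l) :
    ∃ a c : Fin (n - 1), a ≠ c ∧ FreeMonoid.toList l = a :: wab a c ∧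
      FreeMonoid.toList r = c :: wab c a := by
  have far_ne : ∀ {x y : Fin (n - 1)}, FarP x y → x ≠ y := fun h => h.ne
  rcases h with h | h
  · cases h with
    | comm a b hab =>
        refine ⟨a, b, FarP.ne hab, ?_, ?_⟩ <;>
          simp [wab_far (show FarP a b from hab), wab_far (FarP.symm (show FarP a b from hab)),
            FreeMonoid.toList_mul, FreeMonoid.toList_of]
    | braid a b hab =>
        have hadj : AdjP a b := Or.inl hab
        refine ⟨a, b, hadj.ne, ?_, ?_⟩ <;>
          simp [wab_adj hadj, wab_adj hadj.symm, FreeMonoid.toList_mul, FreeMonoid.toList_of]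
  · cases h with
    | comm a b hab =>
        refine ⟨b, a, (FarP.ne (show FarP a b from hab)).symm, ?_, ?_⟩ <;>
          simp [wab_far (FarP.symm (show FarP a b from hab)), wab_far (show FarP a b from hab),
            FreeMonoid.toList_mul, FreeMonoid.toList_of]
    | braid a b hab =>
        have hadj : AdjP a b := Or.inl hab
        refine ⟨b, a, hadj.ne.symm, ?_, ?_⟩ <;>
          simp [wab_adj hadj.symm, wab_adj hadj, FreeMonoid.toList_mul, FreeMonoid.toList_of]

/-- analysis of one rewriting step on a word with an explicit head letter -/
lemma step_cons {a : Fin (n - 1)} {X : List (Fin (n - 1))} {V : Word n}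
    (h : Step n (FreeMonoid.ofList (a :: X)) V) :
    (∃ X', Step n (FreeMonoid.ofList X) (FreeMonoid.ofList X') ∧
        V = FreeMonoid.ofList (a :: X')) ∨
    (∃ c X₀, a ≠ c ∧ X = wab a c ++ X₀ ∧
        V = FreeMonoid.ofList (c :: (wab c a ++ X₀))) := by
  obtain ⟨p, q, l, r, hlr, hu, hv⟩ := h
  have hu' : a :: X = FreeMonoid.toList p ++ FreeMonoid.toList l ++ FreeMonoid.toList q := by
    have := congrArg FreeMonoid.toList hu
    simpa [FreeMonoid.toList_mul] using this
  have hv' : FreeMonoid.toList V =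
      FreeMonoid.toList p ++ FreeMonoid.toList r ++ FreeMonoid.toList q := by
    have := congrArg FreeMonoid.toList hv
    simpa [FreeMonoid.toList_mul] using this
  obtain ⟨a', c, hac, hl, hr⟩ := rel_shape hlr
  cases hp : FreeMonoid.toList p with
  | nil =>
      right
      rw [hp, List.nil_append] at hu' hv'
      rw [hl, List.cons_append] at hu'
      injection hu' with ha hX
      subst ha
      refine ⟨c, FreeMonoid.toList q, hac, hX, ?_⟩
      rw [hr, List.cons_append] at hv'
      rw [← FreeMonoid.ofList_toList V, hv']
  | cons x p' =>
      left
      rw [hp] at hu' hv'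
      rw [List.cons_append, List.cons_append] at hu'
      injection hu' with ha hX
      subst ha
      refine ⟨p' ++ FreeMonoid.toList r ++ FreeMonoid.toList q,
        ⟨FreeMonoid.ofList p', q, l, r, hlr, ?_, ?_⟩, ?_⟩
      · rw [hX, FreeMonoid.ofList_append, FreeMonoid.ofList_append,
          FreeMonoid.ofList_toList, FreeMonoid.ofList_toList]
      · rw [FreeMonoid.ofList_append, FreeMonoid.ofList_append,
          FreeMonoid.ofList_toList, FreeMonoid.ofList_toList]
      · rw [← FreeMonoid.ofList_toList V, hv']
        rfl

end Garside
section GarsideMain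
open Relation FreeMonoid

variable {n : ℕ}

theorem garside : ∀ (ℓ : ℕ) (X Y : List (Fin (n - 1))) (a b : Fin (n - 1)),
    X.length = ℓ →
    Relation.ReflTransGen (Step n) (FreeMonoid.ofList (a :: X)) (FreeMonoid.ofList (b :: Y)) →
    (a = b → prl X = prl Y) ∧
      (a ≠ b → ∃ Z, prl X = prl (wab a b ++ Z) ∧ prl Y = prl (wab b a ++ Z)) := by
  intro ℓ
  induction ℓ using Nat.strong_induction_on with
  | _ ℓ ih =>
  have key : ∀ (X' Y' : List (Fin (n - 1))) (a' b' : Fin (n - 1)), X'.length < ℓ →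
      prl (a' :: X') = prl (b' :: Y') →
      (a' = b' → prl X' = prl Y') ∧
        (a' ≠ b' → ∃ Z, prl X' = prl (wab a' b' ++ Z) ∧ prl Y' = prl (wab b' a' ++ Z)) :=
    fun X' Y' a' b' hl hpr => ih _ hl X' Y' a' b' rfl (pr_eq_iff.1 hpr)
  intro X Y a b hX hder
  suffices H : ∀ (u : Word n), Relation.ReflTransGen (Step n) u (FreeMonoid.ofList (b :: Y)) →
      ∀ (X : List (Fin (n - 1))) (a : Fin (n - 1)), u = FreeMonoid.ofList (a :: X) →
      X.length = ℓ →
      ((a = b → prl X = prl Y) ∧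
        (a ≠ b → ∃ Z, prl X = prl (wab a b ++ Z) ∧ prl Y = prl (wab b a ++ Z))) by
    exact H _ hder X a rfl hX
  intro u hu
  induction hu using Relation.ReflTransGen.head_induction_on with
  | refl =>
      intro X a hu _
      have : b :: Y = a :: X := by
        have := congrArg FreeMonoid.toList hu
        simpa [FreeMonoid.toList_ofList] using this
      injection this with h1 h2
      subst h1; subst h2
      exact ⟨fun _ => rfl, fun hne => absurd rfl hne⟩
  | head hstep hrest ih2 =>
      intro X a hu hlen
      subst hu
      rcases step_cons hstep with ⟨X', hstep', hV⟩ | ⟨c, X₀, hac, hXdec, hV⟩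
      · -- step inside the tail
        have hXX' : prl X = prl X' := pr_eq_of_step hstep'
        have hlen' : X'.length = ℓ := by
          rw [← prl_length_eq hXX']; exact hlen
        have hC := ih2 X' a hV hlen'
        refine ⟨fun hab => ?_, fun hab => ?_⟩
        · rw [hXX']; exact hC.1 hab
        · obtain ⟨Z, h1, h2⟩ := hC.2 hab
          exact ⟨Z, by rw [hXX', h1], h2⟩
      · -- step at the head
        have hlen2 : (wab c a ++ X₀).length = ℓ := by
          have := hlen
          rw [hXdec, List.length_append] at this
          rw [List.length_append, ← wab_length_symm]
          omega
        have hC := ih2 _ c hV hlen2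
        by_cases hcb : c = b
        · subst hcb
          have h1 := hC.1 rfl
          refine ⟨fun hab => absurd hab hac, fun hab => ?_⟩
          exact ⟨X₀, by rw [hXdec], h1.symm⟩
        · obtain ⟨Z₁, h3, h4⟩ := hC.2 hcb
          by_cases hca : AdjP c a
          · by_cases hcbA : AdjP c b
            · -- AA case
              rw [wab_adj hca, wab_adj hcbA] at h3
              simp only [List.cons_append, List.nil_append] at h3
              have hlX : X₀.length + 2 = ℓ := by
                have := hlen
                rw [hXdec, wab_adj hca.symm, List.length_append] at this
                simp at this; omega
              refine ⟨fun hab => ?_, fun hab => ?_⟩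
              · subst hab
                have h5 := (key (c :: X₀) (c :: Z₁) a a (by simp; omega) h3).1 rfl
                have h6 := (key X₀ Z₁ c c (by omega) h5).1 rfl
                rw [hXdec, wab_adj hca.symm, h4, wab_adj hcbA.symm]
                simp only [List.cons_append, List.nil_append, prl_cons, h6]
              · have fab : FarP a b := adj_adj_far hca hcbA hab
                obtain ⟨Z₂, k3, k4⟩ := (key (c :: X₀) (c :: Z₁) a b (by simp; omega) h3).2 hab
                rw [wab_far fab] at k3
                rw [wab_far fab.symm] at k4
                simp only [List.cons_append, List.singleton_append, List.nil_append] at k3 k4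
                obtain ⟨Z₃, m3, m4⟩ := (key X₀ Z₂ c b (by omega)
                  (by simpa using k3)).2 hcb
                rw [wab_adj hcbA] at m3
                rw [wab_adj hcbA.symm] at m4
                simp only [List.cons_append, List.nil_append] at m3 m4
                have e1 : Z₁.length = X₀.length := by
                  have := prl_length_eq h3; simp at this; omega
                obtain ⟨Z₄, q3, q4⟩ := (key Z₁ Z₂ c a (by omega)
                  (by simpa using k4)).2 (Ne.symm hac)
                rw [wab_adj hca] at q3
                rw [wab_adj hca.symm] at q4
                simp only [List.cons_append, List.nil_append] at q3 q4
                have e2 : Z₂.length = X₀.length := by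
                  have := prl_length_eq k3; simp at this; omega
                have e3 : Z₃.length + 2 = Z₂.length := by
                  have := prl_length_eq m4; simp at this; omega
                have e : prl (b :: Z₃) = prl (a :: Z₄) :=
                  (key (b :: Z₃) (a :: Z₄) c c (by simp; omega)
                    (m4.symm.trans q4)).1 rfl
                obtain ⟨Z₅, r3, r4⟩ := (key Z₃ Z₄ b a (by omega) e).2 (Ne.symm hab)
                rw [wab_far fab.symm] at r3
                rw [wab_far fab] at r4
                simp only [List.singleton_append] at r3 r4
                refine ⟨[c, b, a, c] ++ Z₅, ?_, ?_⟩
                · rw [hXdec, wab_adj hca.symm, wab_far fab]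
                  simp only [List.cons_append, List.singleton_append, List.nil_append]
                  simp only [prl_cons]
                  rw [m3]
                  simp only [prl_cons]
                  rw [r3]
                  simp only [prl_cons]
                  rw [g_comm' fab (g c * (g a * prl Z₅)),
                    g_braid' hca.symm (prl Z₅),
                    g_braid' hcbA (g a * (g c * prl Z₅))]
                · rw [h4, wab_adj hcbA.symm, wab_far fab.symm]
                  simp only [List.cons_append, List.singleton_append, List.nil_append]
                  simp only [prl_cons]
                  rw [q3]
                  simp only [prl_cons]
                  rw [r4]
                  simp only [prl_cons]
                  rw [g_comm' fab.symm (g c * (g b * prl Z₅)),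
                    g_braid' hcbA.symm (prl Z₅),
                    g_braid' hca (g b * (g c * prl Z₅)),
                    g_comm' fab (g c * prl Z₅)]
            · -- AF case
              have fcb : FarP c b := (adjP_or_farP hcb).resolve_left hcbA
              rw [wab_adj hca, wab_far fcb] at h3
              simp only [List.cons_append, List.singleton_append, List.nil_append] at h3
              have hlX : X₀.length + 2 = ℓ := by
                have := hlen
                rw [hXdec, wab_adj hca.symm, List.length_append] at this
                simp at this; omega
              refine ⟨fun hab => ?_, fun hab => ?_⟩
              · subst hab; exact absurd hca fcb.not_adj
              · obtain ⟨Z₂, k3, k4⟩ := (key (c :: X₀) Z₁ a b (by simp; omega) h3).2 hab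
                rcases adjP_or_farP hab with aab | fab
                · -- AF, a b adjacent
                  rw [wab_adj aab] at k3
                  rw [wab_adj aab.symm] at k4
                  simp only [List.cons_append, List.nil_append] at k3 k4
                  obtain ⟨Z₃, m3, m4⟩ := (key X₀ (a :: Z₂) c b (by omega) k3).2 hcb
                  rw [wab_far fcb] at m3
                  rw [wab_far fcb.symm] at m4
                  simp only [List.singleton_append] at m3 m4
                  have e1 : X₀.length = Z₂.length + 1 := by
                    have := prl_length_eq k3; simp at this; omega
                  obtain ⟨Z₄, p3, p4⟩ := (key Z₂ Z₃ a c (by omega) m4).2 hac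
                  rw [wab_adj hca.symm] at p3
                  rw [wab_adj hca] at p4
                  simp only [List.cons_append, List.nil_append] at p3 p4
                  refine ⟨[c, a, b] ++ Z₄, ?_, ?_⟩
                  · rw [hXdec, wab_adj hca.symm, wab_adj aab]
                    simp only [List.cons_append, List.singleton_append, List.nil_append]
                    simp only [prl_cons]
                    rw [m3]
                    simp only [prl_cons]
                    rw [p4]
                    simp only [prl_cons]
                    rw [g_braid' aab (g c * prl Z₄),
                      g_comm' fcb (g a * (g b * (g c * prl Z₄))),
                      g_comm' fcb.symm (prl Z₄),
                      g_braid' hca (g b * prl Z₄)]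
                  · rw [h4, wab_far fcb.symm, wab_adj aab.symm]
                    simp only [List.cons_append, List.singleton_append, List.nil_append]
                    simp only [prl_cons]
                    rw [k4]
                    simp only [prl_cons]
                    rw [p3]
                    simp only [prl_cons]
                    rw [g_comm' fcb.symm (g a * prl Z₄),
                      g_braid' hca (g b * (g a * prl Z₄)),
                      g_braid' aab (prl Z₄),
                      g_comm' fcb (g a * (g b * prl Z₄))]
                · -- AF, a b far
                  rw [wab_far fab] at k3
                  rw [wab_far fab.symm] at k4
                  simp only [List.singleton_append] at k3 k4
                  obtain ⟨Z₃, m3, m4⟩ := (key X₀ Z₂ c b (by omega) k3).2 hcb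
                  rw [wab_far fcb] at m3
                  rw [wab_far fcb.symm] at m4
                  simp only [List.singleton_append] at m3 m4
                  refine ⟨[c, a] ++ Z₃, ?_, ?_⟩
                  · rw [hXdec, wab_adj hca.symm, wab_far fab]
                    simp only [List.cons_append, List.singleton_append, List.nil_append]
                    simp only [prl_cons]
                    rw [m3]
                    simp only [prl_cons]
                    rw [g_comm' fab (prl Z₃),
                      g_comm' fcb (g a * prl Z₃)]
                  · rw [h4, wab_far fcb.symm, wab_far fab.symm]
                    simp only [List.cons_append, List.singleton_append, List.nil_append]
                    simp only [prl_cons]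
                    rw [k4]
                    simp only [prl_cons]
                    rw [m4]
                    simp only [prl_cons]
                    rw [g_braid' hca (prl Z₃)]
          · have fca : FarP c a := (adjP_or_farP (Ne.symm hac)).resolve_left hca
            by_cases hcbA : AdjP c b
            · -- FA case
              rw [wab_far fca, wab_adj hcbA] at h3
              simp only [List.cons_append, List.singleton_append, List.nil_append] at h3
              have hlX : X₀.length + 1 = ℓ := by
                have := hlen
                rw [hXdec, wab_far fca.symm, List.length_append] at this
                simp at this; omega
              refine ⟨fun hab => ?_, fun hab => ?_⟩
              · subst hab; exact absurd hcbA fca.not_adj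
              · obtain ⟨Z₂, k3, k4⟩ := (key X₀ (c :: Z₁) a b (by omega) h3).2 hab
                have e1 : X₀.length = Z₁.length + 1 := by
                  have := prl_length_eq h3; simp at this; omega
                rcases adjP_or_farP hab with aab | fab
                · -- FA, a b adjacent
                  rw [wab_adj aab] at k3
                  rw [wab_adj aab.symm] at k4
                  simp only [List.cons_append, List.nil_append] at k3 k4
                  obtain ⟨Z₃, m3, m4⟩ := (key Z₁ (b :: Z₂) c a (by omega) k4).2 (Ne.symm hac)
                  rw [wab_far fca] at m3
                  rw [wab_far fca.symm] at m4
                  simp only [List.singleton_append] at m3 m4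
                  have e2 : X₀.length = Z₂.length + 2 := by
                    have := prl_length_eq k3; simp at this; omega
                  obtain ⟨Z₄, p3, p4⟩ := (key Z₂ Z₃ b c (by omega) m4).2 (Ne.symm hcb)
                  rw [wab_adj hcbA.symm] at p3
                  rw [wab_adj hcbA] at p4
                  simp only [List.cons_append, List.nil_append] at p3 p4
                  refine ⟨[c, b, a] ++ Z₄, ?_, ?_⟩
                  · rw [hXdec, wab_far fca.symm, wab_adj aab]
                    simp only [List.cons_append, List.singleton_append, List.nil_append]
                    simp only [prl_cons]
                    rw [k3]
                    simp only [prl_cons]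
                    rw [p3]
                    simp only [prl_cons]
                    rw [g_comm' fca.symm (g b * prl Z₄),
                      g_braid' hcbA (g a * (g b * prl Z₄)),
                      g_braid' aab.symm (prl Z₄),
                      g_comm' fca (g b * (g a * prl Z₄))]
                  · rw [h4, wab_adj hcbA.symm, wab_adj aab.symm]
                    simp only [List.cons_append, List.singleton_append, List.nil_append]
                    simp only [prl_cons]
                    rw [m3]
                    simp only [prl_cons]
                    rw [p4]
                    simp only [prl_cons]
                    rw [g_braid' aab.symm (g c * prl Z₄),
                      g_comm' fca (g b * (g a * (g c * prl Z₄))),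
                      g_comm' fca.symm (prl Z₄),
                      g_braid' hcbA (g a * prl Z₄)]
                · -- FA, a b far
                  rw [wab_far fab] at k3
                  rw [wab_far fab.symm] at k4
                  simp only [List.singleton_append] at k3 k4
                  obtain ⟨Z₃, m3, m4⟩ := (key Z₁ Z₂ c a (by omega) k4).2 (Ne.symm hac)
                  rw [wab_far fca] at m3
                  rw [wab_far fca.symm] at m4
                  simp only [List.singleton_append] at m3 m4
                  refine ⟨[c, b] ++ Z₃, ?_, ?_⟩
                  · rw [hXdec, wab_far fca.symm, wab_far fab]
                    simp only [List.cons_append, List.singleton_append, List.nil_append]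
                    simp only [prl_cons]
                    rw [k3]
                    simp only [prl_cons]
                    rw [m4]
                    simp only [prl_cons]
                    rw [g_braid' hcbA (prl Z₃)]
                  · rw [h4, wab_adj hcbA.symm, wab_far fab.symm]
                    simp only [List.cons_append, List.singleton_append, List.nil_append]
                    simp only [prl_cons]
                    rw [m3]
                    simp only [prl_cons]
                    rw [g_comm' fab.symm (prl Z₃),
                      g_comm' fca (g b * prl Z₃)]
            · -- FF case
              have fcb : FarP c b := (adjP_or_farP hcb).resolve_left hcbA
              rw [wab_far fca, wab_far fcb] at h3
              simp only [List.singleton_append] at h3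
              have hlX : X₀.length + 1 = ℓ := by
                have := hlen
                rw [hXdec, wab_far fca.symm, List.length_append] at this
                simp at this; omega
              refine ⟨fun hab => ?_, fun hab => ?_⟩
              · subst hab
                have h5 := (key X₀ Z₁ a a (by omega) h3).1 rfl
                rw [hXdec, wab_far fca.symm, h4, wab_far fcb.symm]
                simp only [List.singleton_append, prl_cons, h5]
              · obtain ⟨Z₂, k3, k4⟩ := (key X₀ Z₁ a b (by omega) h3).2 hab
                rcases adjP_or_farP hab with aab | fab
                · -- FF, a b adjacent
                  rw [wab_adj aab] at k3
                  rw [wab_adj aab.symm] at k4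
                  simp only [List.cons_append, List.nil_append] at k3 k4
                  refine ⟨[c] ++ Z₂, ?_, ?_⟩
                  · rw [hXdec, wab_far fca.symm, wab_adj aab]
                    simp only [List.cons_append, List.singleton_append, List.nil_append]
                    simp only [prl_cons]
                    rw [k3]
                    simp only [prl_cons]
                    rw [g_comm' fcb (g a * prl Z₂), g_comm' fca (prl Z₂)]
                  · rw [h4, wab_far fcb.symm, wab_adj aab.symm]
                    simp only [List.cons_append, List.singleton_append, List.nil_append]
                    simp only [prl_cons]
                    rw [k4]
                    simp only [prl_cons]
                    rw [g_comm' fca (g b * prl Z₂), g_comm' fcb (prl Z₂)]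
                · -- FF, a b far
                  rw [wab_far fab] at k3
                  rw [wab_far fab.symm] at k4
                  simp only [List.singleton_append] at k3 k4
                  refine ⟨[c] ++ Z₂, ?_, ?_⟩
                  · rw [hXdec, wab_far fca.symm, wab_far fab]
                    simp only [List.cons_append, List.singleton_append, List.nil_append]
                    simp only [prl_cons]
                    rw [k3]
                    simp only [prl_cons]
                    rw [g_comm' fcb (prl Z₂)]
                  · rw [h4, wab_far fcb.symm, wab_far fab.symm]
                    simp only [List.cons_append, List.singleton_append, List.nil_append]
                    simp only [prl_cons]
                    rw [k4]
                    simp only [prl_cons]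
                    rw [g_comm' fca (prl Z₂)]

end GarsideMain
section Cancel
open Relation FreeMonoid

variable {n : ℕ}

lemma cancel_g {a : Fin (n - 1)} {y z : PB n} (h : g a * y = g a * z) : y = z := by
  obtain ⟨uy, rfl⟩ := pr_surjective (n := n) y
  obtain ⟨uz, rfl⟩ := pr_surjective (n := n) z
  have h' : prl (a :: FreeMonoid.toList uy) = prl (a :: FreeMonoid.toList uz) := by
    simp only [prl_cons, prl_toList, h]
  have := (garside (FreeMonoid.toList uy).length (FreeMonoid.toList uy)
    (FreeMonoid.toList uz) a a rfl (pr_eq_iff.1 h')).1 rfl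
  rwa [prl_toList, prl_toList] at this

lemma pb_cancel_left {x y z : PB n} (h : x * y = x * z) : y = z := by
  obtain ⟨u, rfl⟩ := pr_surjective (n := n) x
  rw [← prl_toList] at h
  revert h
  generalize FreeMonoid.toList u = l
  induction l generalizing y z with
  | nil => intro h; simpa using h
  | cons a l ihl =>
      intro h
      rw [prl_cons, mul_assoc, mul_assoc] at h
      have := cancel_g h
      exact ihl this

lemma ldvd_refl (x : PB n) : ldvd n x x := ⟨1, mul_one x⟩

lemma ldvd_trans {x y z : PB n} (h1 : ldvd n x y) (h2 : ldvd n y z) : ldvd n x z := by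
  obtain ⟨c, rfl⟩ := h1; obtain ⟨d, rfl⟩ := h2; exact ⟨c * d, (mul_assoc _ _ _).symm⟩

lemma len_le_of_ldvd {x y : PB n} (h : ldvd n x y) : len n x ≤ len n y := by
  obtain ⟨c, rfl⟩ := h; rw [len_mul]; omega

lemma eq_of_ldvd_of_len_ge {x y : PB n} (h : ldvd n x y) (hl : len n y ≤ len n x) : x = y := by
  obtain ⟨c, rfl⟩ := h
  rw [len_mul] at hl
  have : len n c = 0 := by omega
  rw [eq_one_of_len_eq_zero this, mul_one]

lemma one_ldvd (x : PB n) : ldvd n 1 x := ⟨x, one_mul x⟩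

lemma ldvd_mul_right (x y : PB n) : ldvd n x (x * y) := ⟨y, rfl⟩

/-- every element of a set has a minimal divisor in the set -/
lemma exists_minimal_ldvd (S : Set (PB n)) {α : PB n} (hα : α ∈ S) :
    ∃ d ∈ minimals n S, ldvd n d α := by
  suffices H : ∀ (k : ℕ) (β : PB n), len n β = k → β ∈ S →
      ∃ d ∈ minimals n S, ldvd n d β from H (len n α) α rfl hα
  intro k
  induction k using Nat.strong_induction_on with
  | _ k ihk =>
  intro β hβl hβS
  by_cases hmin : ∀ b ∈ S, ldvd n b β → b = β
  · exact ⟨β, ⟨hβS, hmin⟩, ldvd_refl β⟩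
  · push_neg at hmin
    obtain ⟨b, hbS, hbd, hbne⟩ := hmin
    have hlt : len n b < len n β := by
      rcases lt_or_eq_of_le (len_le_of_ldvd hbd) with h | h
      · exact h
      · exact absurd (eq_of_ldvd_of_len_ge hbd (le_of_eq h.symm)) hbne
    obtain ⟨d, hd, hdb⟩ := ihk (len n b) (hβl ▸ hlt) b rfl hbS
    exact ⟨d, hd, ldvd_trans hdb hbd⟩

end Cancel
section LexLn
open FreeMonoid

variable {n : ℕ}

lemma lexLt_trichotomy (u v : Word n) : lexLt u v ∨ u = v ∨ lexLt v u := by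
  rcases trichotomous_of (List.Lex (· < ·))
      (FreeMonoid.toList u) (FreeMonoid.toList v) with h | h | h
  · exact Or.inl h
  · refine Or.inr (Or.inl ?_)
    have := congrArg FreeMonoid.ofList h
    rwa [FreeMonoid.ofList_toList, FreeMonoid.ofList_toList] at this
  · exact Or.inr (Or.inr h)

lemma lexLt_irrefl (u : Word n) : ¬ lexLt u u :=
  irrefl_of (List.Lex (· < ·)) _

/-- appending on the left preserves strict lex -/
lemma lex_append_left {F : Type*} {r : F → F → Prop} (c : List F) {s t : List F}
    (h : List.Lex r s t) : List.Lex r (c ++ s) (c ++ t) := by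
  induction c with
  | nil => exact h
  | cons x c ih => exact List.Lex.cons ih

/-- the key decomposition for lex-comparison with a concatenation -/
lemma lex_append_cases {F : Type*} [LinearOrder F] :
    ∀ (c : List F) (u t : List F), List.Lex (· < ·) u (c ++ t) →
    u.length = c.length + t.length →
    (∃ u₂, u = c ++ u₂ ∧ List.Lex (· < ·) u₂ t) ∨
      (∀ s t' : List F, List.Lex (· < ·) (u ++ s) (c ++ t')) := by
  intro c
  induction c with
  | nil => intro u t h _; exact Or.inl ⟨u, rfl, h⟩
  | cons x c ih =>
      intro u t h hl
      cases u with
      | nil => simp at hl; omega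
      | cons y u' =>
          rw [List.cons_append] at h
          cases h with
          | cons h' =>
              rcases ih u' t h' (by simp at hl; omega) with ⟨u₂, he, hlex⟩ | hall
              · exact Or.inl ⟨u₂, by rw [he, List.cons_append], hlex⟩
              · right
                intro s t'
                rw [List.cons_append, List.cons_append]
                exact List.Lex.cons (hall s t')
          | rel hr =>
              right
              intro s t'
              rw [List.cons_append, List.cons_append]
              exact List.Lex.rel hr

/-- all words of a fixed length, as a `Finset`. -/
def WordsLen (n L : ℕ) : Finset (Word n) :=
  (Finset.univ : Finset (List.Vector (Fin (n - 1)) L)).map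
    ⟨fun v => FreeMonoid.ofList v.toList, by
      intro a b hab
      apply List.Vector.toList_injective
      have := congrArg FreeMonoid.toList hab
      rwa [FreeMonoid.toList_ofList, FreeMonoid.toList_ofList] at this⟩

lemma mem_wordsLen {L : ℕ} {u : Word n} : u ∈ WordsLen n L ↔ wlen u = L := by
  constructor
  · intro hu
    obtain ⟨v, _, rfl⟩ := Finset.mem_map.1 hu
    change wlen (FreeMonoid.ofList v.toList) = L
    rw [wlen_ofList, v.toList_length]
  · intro hu
    refine Finset.mem_map.2 ⟨⟨FreeMonoid.toList u, hu⟩, Finset.mem_univ _, ?_⟩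
    exact FreeMonoid.ofList_toList u

lemma exists_lexRep (β : PB n) : ∃ u : Word n, pr n u = β ∧ u ∈ Ln n := by
  classical
  set s : Finset (Word n) := (WordsLen n (len n β)).filter (fun u => pr n u = β) with hs
  have hns : s.Nonempty := by
    obtain ⟨u₀, rfl⟩ := pr_surjective (n := n) β
    exact ⟨u₀, Finset.mem_filter.2 ⟨mem_wordsLen.2 (len_pr u₀).symm, rfl⟩⟩
  obtain ⟨u, hu, hmin⟩ := Finset.exists_min_image s (fun u => FreeMonoid.toList u) hns
  have hpru : pr n u = β := (Finset.mem_filter.1 hu).2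
  refine ⟨u, hpru, ?_⟩
  intro v hv hlex
  have hvs : v ∈ s := by
    refine Finset.mem_filter.2 ⟨mem_wordsLen.2 ?_, by rw [hv, hpru]⟩
    rw [← len_pr v, hv, hpru]
  have hle := hmin v hvs
  exact absurd (show FreeMonoid.toList v < FreeMonoid.toList u from hlex)
    (not_lt_of_ge hle)

lemma omegaRep_spec (β : PB n) :
    pr n (omegaRep n β) = β ∧ omegaRep n β ∈ Ln n := by
  rw [omegaRep, dif_pos (exists_lexRep β)]
  exact (exists_lexRep β).choose_spec

lemma pr_omegaRep (β : PB n) : pr n (omegaRep n β) = β := (omegaRep_spec β).1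

lemma omegaRep_mem_Ln (β : PB n) : omegaRep n β ∈ Ln n := (omegaRep_spec β).2

lemma Ln_unique {u v : Word n} (hu : u ∈ Ln n) (hv : v ∈ Ln n) (h : pr n u = pr n v) :
    u = v := by
  rcases lexLt_trichotomy u v with hl | he | hl
  · exact absurd hl (hv u h)
  · exact he
  · exact absurd hl (hu v h.symm)

lemma omegaRep_pr {u : Word n} (hu : u ∈ Ln n) : omegaRep n (pr n u) = u :=
  Ln_unique (omegaRep_mem_Ln _) hu (pr_omegaRep _)

lemma wlen_omegaRep (β : PB n) : wlen (omegaRep n β) = len n β := by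
  rw [← len_pr (omegaRep n β), pr_omegaRep]

/-- suffixes of lex-representatives are lex-representatives -/
lemma Ln_suffix {w w' : Word n} (h : w * w' ∈ Ln n) : w' ∈ Ln n := by
  intro v hv hlex
  refine h (w * v) (by rw [map_mul, map_mul, hv]) ?_
  rw [lexLt, FreeMonoid.toList_mul, FreeMonoid.toList_mul]
  exact lex_append_left _ hlex

/-- `F_n(w)` is closed under taking right multiples -/
lemma Fset_upward {w : Word n} {α δ : PB n} (hα : α ∈ Fset n w) (hd : ldvd n α δ) :
    δ ∈ Fset n w := by
  obtain ⟨γ, rfl⟩ := hd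
  intro hδ   -- hδ : w * omegaRep n (α * γ) ∈ Ln n
  -- from hα get a smaller word
  rw [Fset, Set.mem_setOf_eq] at hα
  -- choose a witness that w * ω(α) is not minimal
  by_cases hLn : w * omegaRep n α ∈ Ln n
  · exact hα hLn
  · simp only [Ln, Set.mem_setOf_eq] at hLn
    push_neg at hLn
    obtain ⟨v, hveq, hvlex⟩ := hLn
    -- compare v with w ++ ω(α)
    have hlen : (FreeMonoid.toList v).length =
        (FreeMonoid.toList w).length + (FreeMonoid.toList (omegaRep n α)).length := by
      have := wlen_eq_of_pr_eq hveq
      rw [wlen, wlen, FreeMonoid.toList_mul, List.length_append] at this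
      exact this
    have hvlex' : List.Lex (· < ·) (FreeMonoid.toList v)
        (FreeMonoid.toList w ++ FreeMonoid.toList (omegaRep n α)) := by
      rw [lexLt, FreeMonoid.toList_mul] at hvlex
      exact hvlex
    rcases lex_append_cases (FreeMonoid.toList w) (FreeMonoid.toList v)
        (FreeMonoid.toList (omegaRep n α)) hvlex' hlen with ⟨u₂, he, hlex2⟩ | hall
    · -- v = w ++ u₂ with u₂ <lex ω(α); contradicts minimality of ω(α)
      have hveq' : pr n (w * FreeMonoid.ofList u₂) = pr n (w * omegaRep n α) := by
        rw [← hveq]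
        congr 1
        rw [← FreeMonoid.ofList_toList v, he, FreeMonoid.ofList_append,
          FreeMonoid.ofList_toList]
      have : pr n (FreeMonoid.ofList u₂) = pr n (omegaRep n α) := by
        rw [map_mul, map_mul] at hveq'
        exact pb_cancel_left hveq'
      exact omegaRep_mem_Ln α _ this hlex2
    · -- v is lex-smaller in a position inside w
      exact hδ (v * omegaRep n γ)
        (by simp only [map_mul, hveq, pr_omegaRep, mul_assoc])
        (hall (FreeMonoid.toList (omegaRep n γ)) (FreeMonoid.toList (omegaRep n (α * γ))))

end LexLn
section Counting
open FreeMonoid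

variable {n : ℕ}

open Classical in
/-- the elements of `B_n^+` of length `L`, as a `Finset` -/
noncomputable def Uset (n L : ℕ) : Finset (PB n) := (WordsLen n L).image (pr n)

lemma mem_Uset {L : ℕ} {x : PB n} : x ∈ Uset n L ↔ len n x = L := by
  classical
  constructor
  · intro hx
    obtain ⟨u, hu, rfl⟩ := Finset.mem_image.1 hx
    rw [len_pr]
    exact mem_wordsLen.1 hu
  · intro hx
    obtain ⟨u, rfl⟩ := pr_surjective (n := n) x
    exact Finset.mem_image.2 ⟨u, mem_wordsLen.2 ((len_pr u).symm.trans hx), rfl⟩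

lemma xcount_neg {j : ℤ} (hj : j < 0) : xcount n j = 0 := by
  have : IsEmpty {x : PB n // (len n x : ℤ) = j} := by
    refine ⟨fun ⟨x, hx⟩ => ?_⟩
    omega
  rw [xcount]
  exact Nat.card_of_isEmpty

lemma xcount_coe (L : ℕ) : xcount n (L : ℤ) = (Uset n L).card := by
  rw [xcount]
  rw [Nat.card_congr (Equiv.subtypeEquivRight (q := fun x => x ∈ Uset n L)
    (fun x => by simp only [mem_Uset]; exact Int.natCast_inj))]
  exact Nat.card_eq_finsetCard _

open Classical in
lemma filter_ldvd_card (d : PB n) (L : ℕ) :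
    (((Uset n L).filter (fun α => ldvd n d α)).card : ℤ) =
      (xcount n ((L : ℤ) - (len n d : ℤ)) : ℤ) := by
  rcases le_or_gt (len n d) L with hle | hlt
  · have harg : (L : ℤ) - (len n d : ℤ) = ((L - len n d : ℕ) : ℤ) := by omega
    rw [harg, xcount_coe]
    have hbij : (Uset n (L - len n d)).card =
        ((Uset n L).filter (fun α => ldvd n d α)).card := by
      refine Finset.card_bij (fun γ _ => d * γ) ?_ ?_ ?_
      · intro γ hγ
        have hlγ := mem_Uset.1 hγ
        exact Finset.mem_filter.2 ⟨mem_Uset.2 (by rw [len_mul, hlγ]; omega),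
          ldvd_mul_right d γ⟩
      · intro γ₁ h₁ γ₂ h₂ he
        exact pb_cancel_left he
      · intro α hα
        obtain ⟨hu, hd'⟩ := Finset.mem_filter.1 hα
        obtain ⟨c, rfl⟩ := hd'
        refine ⟨c, mem_Uset.2 ?_, rfl⟩
        have := mem_Uset.1 hu
        rw [len_mul] at this
        omega
    exact_mod_cast hbij.symm
  · have h0 : ((Uset n L).filter (fun α => ldvd n d α)) = ∅ := by
      refine Finset.filter_eq_empty_iff.2 ?_
      intro α hα hd
      have := len_le_of_ldvd hd
      rw [mem_Uset.1 hα] at this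
      omega
    rw [h0, xcount_neg (by omega)]
    simp

open Classical in
/-- generic inclusion–exclusion over a finite family of "bad" predicates -/
lemma incl_excl {X : Type*} (U : Finset X) (F : Finset X) (r : X → X → Prop) :
    ((U.filter (fun α => ∀ f ∈ F, ¬ r f α)).card : ℤ) =
      ∑ S ∈ F.powerset, (-1 : ℤ) ^ S.card *
        ((U.filter (fun α => ∀ f ∈ S, r f α)).card : ℤ) := by
  classical
  have expand : ∀ α, (if (∀ f ∈ F, ¬ r f α) then (1 : ℤ) else 0) =
      ∑ S ∈ F.powerset, (-1 : ℤ) ^ S.card * (if (∀ f ∈ S, r f α) then 1 else 0) := by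
    intro α
    have h1 : ∏ f ∈ F, ((fun f => if r f α then (-1 : ℤ) else 0) f + (fun _ => (1:ℤ)) f) =
        if (∀ f ∈ F, ¬ r f α) then 1 else 0 := by
      rw [← Finset.prod_boole (p := fun f => ¬ r f α)]
      refine Finset.prod_congr rfl fun f _ => ?_
      by_cases h : r f α <;> simp [h]
    rw [Finset.prod_add] at h1
    rw [← h1]
    refine Finset.sum_congr rfl fun S hS => ?_
    have : ∏ f ∈ S, (if r f α then (-1 : ℤ) else 0) =
        (-1 : ℤ) ^ S.card * ∏ f ∈ S, (if r f α then (1 : ℤ) else 0) := by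
      rw [← Finset.prod_const (-1 : ℤ), ← Finset.prod_mul_distrib]
      refine Finset.prod_congr rfl fun f _ => ?_
      by_cases h : r f α <;> simp [h]
    simp only [this, Finset.prod_const_one, mul_one, Finset.prod_boole]
  calc ((U.filter (fun α => ∀ f ∈ F, ¬ r f α)).card : ℤ)
      = ∑ α ∈ U, (if (∀ f ∈ F, ¬ r f α) then (1 : ℤ) else 0) := by
        rw [Finset.sum_boole]
    _ = ∑ α ∈ U, ∑ S ∈ F.powerset, (-1 : ℤ) ^ S.card *
          (if (∀ f ∈ S, r f α) then 1 else 0) := Finset.sum_congr rfl fun α _ => expand α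
    _ = ∑ S ∈ F.powerset, ∑ α ∈ U, (-1 : ℤ) ^ S.card *
          (if (∀ f ∈ S, r f α) then 1 else 0) := Finset.sum_comm
    _ = ∑ S ∈ F.powerset, (-1 : ℤ) ^ S.card *
          ((U.filter (fun α => ∀ f ∈ S, r f α)).card : ℤ) := by
        refine Finset.sum_congr rfl fun S _ => ?_
        rw [← Finset.mul_sum, Finset.sum_boole]

end Counting
section Final
open FreeMonoid

variable {n : ℕ}

lemma wlen_mul (u v : Word n) : wlen (u * v) = wlen u + wlen v := by
  rw [wlen, wlen, wlen, FreeMonoid.toList_mul, List.length_append]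

lemma head_le_of_sigma_ldvd {m : ℕ} (hm' : m ≤ n - 1) {i : ℕ} (h1 : 1 ≤ i) (h2 : i ≤ m)
    {α : PB n} (hd : ldvd n (pr n (sigma n i)) α) :
    ∃ j : ℕ, 1 ≤ j ∧ j ≤ m ∧ ∃ u : Word n, omegaRep n α = sigma n j * u := by
  obtain ⟨c, hc⟩ := hd
  have hiv : 1 ≤ i ∧ i ≤ n - 1 := ⟨h1, by omega⟩
  set a₀ : Fin (n - 1) := ⟨i - 1, by omega⟩ with ha₀
  have hsig : sigma n i = FreeMonoid.of a₀ := by rw [sigma, dif_pos hiv]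
  set v' : Word n := sigma n i * omegaRep n c with hv'def
  have hv' : pr n v' = α := by rw [hv'def, map_mul, pr_omegaRep, hc]
  have hne : ¬ lexLt v' (omegaRep n α) :=
    omegaRep_mem_Ln α v' (by rw [hv', pr_omegaRep])
  have hlenα : 1 ≤ wlen (omegaRep n α) := by
    rw [wlen_omegaRep, ← hc, len_mul, len_pr, hsig]
    have : wlen (FreeMonoid.of a₀) = 1 := rfl
    omega
  have htv' : FreeMonoid.toList v' = a₀ :: FreeMonoid.toList (omegaRep n c) := by
    rw [hv'def, hsig, FreeMonoid.toList_mul, FreeMonoid.toList_of]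
    rfl
  rcases lexLt_trichotomy (omegaRep n α) v' with hlt | heq | hgt
  · -- ω α <lex v'
    rw [lexLt, htv'] at hlt
    cases hl : FreeMonoid.toList (omegaRep n α) with
    | nil => rw [wlen, hl] at hlenα; simp at hlenα
    | cons x t =>
        rw [hl] at hlt
        have hxle : x.val ≤ a₀.val := by
          cases hlt with
          | cons h => exact le_rfl
          | rel h => exact le_of_lt h
        have ha₀v : a₀.val = i - 1 := rfl
        refine ⟨x.val + 1, by omega, by omega, FreeMonoid.ofList t, ?_⟩
        rw [sigma_of]
        have := congrArg FreeMonoid.ofList hl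
        rw [FreeMonoid.ofList_toList] at this
        rw [this, FreeMonoid.ofList_cons]
  · exact ⟨i, h1, h2, omegaRep n c, by rw [heq]⟩
  · exact absurd hgt hne
end Final
/-- the inclusion-exclusion formula
`x_{n,k}(w,m) = Σ_{S ⊆ F_n^min(w,m)} (-1)^|S| · x_{n, k - |w| - |∨S|}`. -/
theorem statement_18 (n : ℕ) (hn : 2 ≤ n) (w : Word n) (hw : w ∈ Ln n)
    (m : ℕ) (hm : 1 ≤ m) (hm' : m ≤ n - 1) (k : ℕ)
    (F : Finset (PB n)) (hF : (F : Set (PB n)) = FminM n w m)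
    (D : Finset (PB n) → PB n)
    (hD : ∀ S ∈ F.powerset, IsLcm n (S : Set (PB n)) (D S)) :
    (xwm n k w m : ℤ) =
      ∑ S ∈ F.powerset, (-1 : ℤ) ^ S.card *
        (xcount n ((k : ℤ) - (wlen w : ℤ) - (len n (D S) : ℤ)) : ℤ) := by
  classical
  by_cases hk : wlen w ≤ k
  · set L : ℕ := k - wlen w with hL
    have hFm : ∀ f, f ∈ F ↔ f ∈ FminM n w m := fun f => by rw [← Finset.mem_coe, hF]
    set s : Finset (PB n) := (Uset n L).filter (fun α => ∀ f ∈ F, ¬ ldvd n f α) with hs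
    -- Step 1: identify `xwm` with `s.card`
    have hmem : ∀ α ∈ s, wlen (w * omegaRep n α) = k ∧ (w * omegaRep n α) ∈ Ln n ∧
        ∃ w' : Word n, w * omegaRep n α = w * w' ∧
          ∀ i : ℕ, 1 ≤ i → i ≤ m → ¬ ∃ u : Word n, w' = sigma n i * u := by
      intro α hα
      obtain ⟨hαU, hαF⟩ := Finset.mem_filter.1 hα
      have hlα : len n α = L := mem_Uset.1 hαU
      have hfree : ∀ x ∈ ({x | ∃ i : ℕ, 1 ≤ i ∧ i ≤ m ∧ x = pr n (sigma n i)} ∪ Fmin n w :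
          Set (PB n)), ¬ ldvd n x α := by
        intro x hx hdx
        obtain ⟨f, hfmin, hfd⟩ := exists_minimal_ldvd _ hx
        exact hαF f ((hFm f).2 hfmin) (ldvd_trans hfd hdx)
      refine ⟨?_, ?_, omegaRep n α, rfl, ?_⟩
      · rw [wlen_mul, wlen_omegaRep, hlα]; omega
      · by_contra hnot
        have hαFset : α ∈ Fset n w := hnot
        obtain ⟨d, hdmin, hdd⟩ := exists_minimal_ldvd (Fset n w) hαFset
        exact hfree d (Or.inr hdmin) hdd
      · rintro i h1 h2 ⟨u, hu⟩
        refine hfree (pr n (sigma n i)) (Or.inl ⟨i, h1, h2, rfl⟩) ?_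
        exact ⟨pr n u, by rw [← map_mul, ← hu, pr_omegaRep]⟩
    have hinj : ∀ α₁ ∈ s, ∀ α₂ ∈ s, w * omegaRep n α₁ = w * omegaRep n α₂ → α₁ = α₂ := by
      intro α₁ _ α₂ _ he
      have := congrArg (pr n) he
      rw [map_mul, map_mul, pr_omegaRep, pr_omegaRep] at this
      exact pb_cancel_left this
    have hsurj : ∀ v : Word n, (wlen v = k ∧ v ∈ Ln n ∧
        ∃ w' : Word n, v = w * w' ∧
          ∀ i : ℕ, 1 ≤ i → i ≤ m → ¬ ∃ u : Word n, w' = sigma n i * u) →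
        ∃ α ∈ s, w * omegaRep n α = v := by
      rintro v ⟨hlv, hvLn, w', hvw, hhead⟩
      have hw'Ln : w' ∈ Ln n := Ln_suffix (hvw ▸ hvLn)
      refine ⟨pr n w', ?_, ?_⟩
      · refine Finset.mem_filter.2 ⟨mem_Uset.2 ?_, ?_⟩
        · rw [len_pr]
          have : wlen (w * w') = k := by rw [← hvw]; exact hlv
          rw [wlen_mul] at this
          omega
        · intro f hf hfd
          have hfmin := (hFm f).1 hf
          rcases hfmin.1 with ⟨i, h1, h2, rfl⟩ | hfFmin
          · obtain ⟨j, hj1, hj2, u, hju⟩ := head_le_of_sigma_ldvd hm' h1 h2 hfd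
            rw [omegaRep_pr hw'Ln] at hju
            exact hhead j hj1 hj2 ⟨u, hju⟩
          · have hFs := Fset_upward hfFmin.1 hfd
            rw [Fset, Set.mem_setOf_eq, omegaRep_pr hw'Ln, ← hvw] at hFs
            exact hFs hvLn
      · rw [omegaRep_pr hw'Ln, ← hvw]
    have hcard1 : xwm n k w m = s.card := by
      rw [xwm, ← Nat.card_eq_finsetCard]
      apply Nat.card_congr
      refine Equiv.symm (Equiv.ofBijective
        (fun x => ⟨w * omegaRep n x.1, hmem x.1 x.2⟩) ⟨?_, ?_⟩)
      · intro x y hxy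
        exact Subtype.ext (hinj _ x.2 _ y.2 (congrArg Subtype.val hxy))
      · rintro ⟨v, hv⟩
        obtain ⟨α, hαs, hαv⟩ := hsurj v hv
        exact ⟨⟨α, hαs⟩, Subtype.ext hαv⟩
    have hsum : ∀ S ∈ F.powerset,
        ((((Uset n L).filter (fun α => ∀ f ∈ S, ldvd n f α)).card : ℤ)) =
          (xcount n ((k : ℤ) - (wlen w : ℤ) - (len n (D S) : ℤ)) : ℤ) := by
      intro S hS
      have hfilt : (Uset n L).filter (fun α => ∀ f ∈ S, ldvd n f α) =
          (Uset n L).filter (fun α => ldvd n (D S) α) := by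
        apply Finset.filter_congr
        intro α _
        constructor
        · intro hall
          exact (hD S hS).2 α (fun a ha => hall a (Finset.mem_coe.1 ha))
        · intro hdα f hf
          exact ldvd_trans ((hD S hS).1 f (Finset.mem_coe.2 hf)) hdα
      rw [hfilt, filter_ldvd_card]
      have harg : (L : ℤ) - (len n (D S) : ℤ) =
          (k : ℤ) - (wlen w : ℤ) - (len n (D S) : ℤ) := by
        have : (L : ℤ) = (k : ℤ) - (wlen w : ℤ) := by omega
        omega
      rw [harg]
    rw [hcard1, hs]
    rw [incl_excl (Uset n L) F (ldvd n)]
    exact Finset.sum_congr rfl fun S hS => by rw [hsum S hS]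
  · -- k < wlen w : both sides vanish
    have hxwm : xwm n k w m = 0 := by
      rw [xwm]
      have : IsEmpty {v : Word n // wlen v = k ∧ v ∈ Ln n ∧
          ∃ w' : Word n, v = w * w' ∧
            ∀ i : ℕ, 1 ≤ i → i ≤ m → ¬ ∃ u : Word n, w' = sigma n i * u} := by
        refine ⟨fun ⟨v, hlv, _, w', hvw, _⟩ => ?_⟩
        have : wlen (w * w') = k := by rw [← hvw]; exact hlv
        rw [wlen_mul] at this
        omega
      exact Nat.card_of_isEmpty
    rw [hxwm]
    symm
    apply Finset.sum_eq_zero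
    intro S _
    have : (k : ℤ) - (wlen w : ℤ) - (len n (D S) : ℤ) < 0 := by omega
    rw [xcount_neg this]
    simp

end BraidPaper
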